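/- Let φ(z) = (K·E(z,k) − E·z)·dn z − k²·K·sn z·cn z, where K = K(k) and E = E(k) are the complete elliptic integrals of the first and second kind and E(z,k) = ∫₀ᶻ dn²y dy. Then L₋[φ] = −2k²E·sn z·cn z, and consequently L₊L₋[φ] = 0. -/

import Mathlib

open MeasureTheory

/-- Complete elliptic integral of the first kind. -/
noncomputable def ellipticK (k : ℝ) : ℝ :=
  ∫ θ in (0:ℝ)..(Real.pi / 2), 1 / Real.sqrt (1 - k ^ 2 * Real.sin θ ^ 2)

/-- Complete elliptic integral of the second kind. -/
noncomputable def ellipticE (k : ℝ) : ℝ :=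
  ∫ θ in (0:ℝ)..(Real.pi / 2), Real.sqrt (1 - k ^ 2 * Real.sin θ ^ 2)

/-- The operator L₋f = −f'' − (2 dn²z + k² − 2)f. -/
noncomputable def Lm (k : ℝ) (dn : ℝ → ℝ) (f : ℝ → ℝ) : ℝ → ℝ :=
  fun z => -(deriv (deriv f) z) - (2 * dn z ^ 2 + k ^ 2 - 2) * f z

/-- The operator L₊f = −f'' − (6 dn²z + k² − 2)f. -/
noncomputable def Lp (k : ℝ) (dn : ℝ → ℝ) (f : ℝ → ℝ) : ℝ → ℝ :=
  fun z => -(deriv (deriv f) z) - (6 * dn z ^ 2 + k ^ 2 - 2) * f z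

/-- with φ(z) = (K·E(z,k) − E·z)·dn z − k²·K·sn z·cn z, one has
L₋[φ] = −2k²E·sn z·cn z and hence L₊L₋[φ] = 0. -/
theorem stmt_3 (k : ℝ) (hk0 : 0 < k) (hk1 : k < 1)
    (sn cn dn : ℝ → ℝ)
    (hsn0 : sn 0 = 0) (hcn0 : cn 0 = 1) (hdn0 : dn 0 = 1)
    (hsn' : ∀ z, HasDerivAt sn (cn z * dn z) z)
    (hcn' : ∀ z, HasDerivAt cn (-(sn z * dn z)) z)
    (hdn' : ∀ z, HasDerivAt dn (-(k ^ 2 * sn z * cn z)) z)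
    (φ : ℝ → ℝ)
    (hφ : ∀ z, φ z = (ellipticK k * (∫ y in (0:ℝ)..z, dn y ^ 2) - ellipticE k * z) * dn z
      - k ^ 2 * ellipticK k * sn z * cn z) :
    (∀ z, Lm k dn φ z = -2 * k ^ 2 * ellipticE k * sn z * cn z) ∧
    (∀ z, Lp k dn (Lm k dn φ) z = 0) := by
  set K := ellipticK k with hK
  set E := ellipticE k with hE
  set F : ℝ → ℝ := fun t => ∫ y in (0:ℝ)..t, dn y ^ 2 with hF
  -- Pythagorean identities
  have hPd : ∀ z, HasDerivAt (fun z => sn z ^ 2 + cn z ^ 2) 0 z := by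
    intro z
    have h := ((hsn' z).fun_pow 2).fun_add ((hcn' z).fun_pow 2)
    convert h using 1
    all_goals first
      | rfl
      | (funext x; simp only [id_eq]; push_cast; ring)
      | (simp only [id_eq]; push_cast; ring)
      | (funext x; push_cast; ring)
      | (push_cast; ring)
  have h1 : ∀ z, sn z ^ 2 + cn z ^ 2 = 1 := by
    intro z
    have := is_const_of_deriv_eq_zero (f := fun z => sn z ^ 2 + cn z ^ 2)
      (fun x => (hPd x).differentiableAt) (fun x => (hPd x).deriv) z 0
    simpa [hsn0, hcn0] using this
  have hQd : ∀ z, HasDerivAt (fun z => dn z ^ 2 + k ^ 2 * sn z ^ 2) 0 z := by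
    intro z
    have h := ((hdn' z).fun_pow 2).fun_add (((hsn' z).fun_pow 2).const_mul (k ^ 2))
    convert h using 1
    all_goals first
      | rfl
      | (funext x; simp only [id_eq]; push_cast; ring)
      | (simp only [id_eq]; push_cast; ring)
      | (funext x; push_cast; ring)
      | (push_cast; ring)
  have h2 : ∀ z, dn z ^ 2 + k ^ 2 * sn z ^ 2 = 1 := by
    intro z
    have := is_const_of_deriv_eq_zero (f := fun z => dn z ^ 2 + k ^ 2 * sn z ^ 2)
      (fun x => (hQd x).differentiableAt) (fun x => (hQd x).deriv) z 0
    simpa [hsn0, hdn0] using this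
  -- dn is continuous, so F has derivative dn²
  have hdndiff : Differentiable ℝ dn := fun z => (hdn' z).differentiableAt
  have hdncont : Continuous (fun y => dn y ^ 2) := hdndiff.continuous.pow 2
  have hI : ∀ z, HasDerivAt F (dn z ^ 2) z := by
    intro z
    exact intervalIntegral.integral_hasDerivAt_right
      (hdncont.intervalIntegrable _ _)
      (hdncont.stronglyMeasurableAtFilter _ _)
      hdncont.continuousAt
  have hφfun : φ = fun z => (K * F z - E * z) * dn z - k ^ 2 * K * sn z * cn z :=
    funext hφ
  -- first derivative of φ
  have hφ1 : ∀ z, HasDerivAt φ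
      (K * dn z ^ 3 - E * dn z - k ^ 2 * sn z * cn z * (K * F z - E * z)
        - k ^ 2 * K * dn z * (cn z ^ 2 - sn z ^ 2)) z := by
    intro z
    rw [hφfun]
    have h := ((((hI z).const_mul K).fun_sub ((hasDerivAt_id z).const_mul E)).fun_mul (hdn' z)).fun_sub
      ((((hsn' z).fun_mul (hcn' z)).const_mul (k ^ 2 * K)))
    convert h using 1
    all_goals first
      | rfl
      | (funext x; simp only [id_eq]; push_cast; ring)
      | (simp only [id_eq]; push_cast; ring)
      | (funext x; push_cast; ring)
      | (push_cast; ring)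
  have hφ1' : deriv φ = fun z =>
      K * dn z ^ 3 - E * dn z - k ^ 2 * sn z * cn z * (K * F z - E * z)
        - k ^ 2 * K * dn z * (cn z ^ 2 - sn z ^ 2) := funext fun z => (hφ1 z).deriv
  -- second derivative of φ
  have hφ2 : ∀ z, HasDerivAt (deriv φ)
      (-(3 * k ^ 2 * K * sn z * cn z * dn z ^ 2) + k ^ 2 * E * sn z * cn z
        - k ^ 2 * dn z * (cn z ^ 2 - sn z ^ 2) * (K * F z - E * z)
        - k ^ 2 * sn z * cn z * (K * dn z ^ 2 - E)
        + k ^ 4 * K * sn z * cn z * (cn z ^ 2 - sn z ^ 2)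
        + 4 * k ^ 2 * K * sn z * cn z * dn z ^ 2) z := by
    intro z
    rw [hφ1']
    have h := (((((hdn' z).fun_pow 3).const_mul K).fun_sub ((hdn' z).const_mul E)).fun_sub
        ((((hsn' z).fun_mul (hcn' z)).const_mul (k ^ 2)).fun_mul
          (((hI z).const_mul K).fun_sub ((hasDerivAt_id z).const_mul E)))).fun_sub
      ((((hdn' z).const_mul (k ^ 2 * K)).fun_mul (((hcn' z).fun_pow 2).fun_sub ((hsn' z).fun_pow 2))))
    convert h using 1
    all_goals first
      | rfl
      | (funext x; simp only [id_eq]; push_cast; ring)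
      | (simp only [id_eq]; push_cast; ring)
      | (funext x; push_cast; ring)
      | (push_cast; ring)
  have hLm : ∀ z, Lm k dn φ z = -2 * k ^ 2 * E * sn z * cn z := by
    intro z
    have hd2 := (hφ2 z).deriv
    unfold Lm
    rw [hd2, hφ z]
    linear_combination ((K * F z - E * z) * dn z * k ^ 2 - K * sn z * cn z * k ^ 4) * h1 z
      + (-2 * (K * F z - E * z) * dn z + 2 * k ^ 2 * K * sn z * cn z) * h2 z
  refine ⟨hLm, ?_⟩
  -- second part
  have hg : Lm k dn φ = fun z => -2 * k ^ 2 * E * sn z * cn z := funext hLm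
  intro z
  rw [hg]
  have hg1 : ∀ z, HasDerivAt (fun z => -2 * k ^ 2 * E * sn z * cn z)
      (-2 * k ^ 2 * E * dn z * (cn z ^ 2 - sn z ^ 2)) z := by
    intro z
    have h := ((hsn' z).fun_mul (hcn' z)).const_mul (-2 * k ^ 2 * E)
    convert h using 1
    all_goals first
      | rfl
      | (funext x; simp only [id_eq]; push_cast; ring)
      | (simp only [id_eq]; push_cast; ring)
      | (funext x; push_cast; ring)
      | (push_cast; ring)
  have hg1' : deriv (fun z => -2 * k ^ 2 * E * sn z * cn z)
      = fun z => -2 * k ^ 2 * E * dn z * (cn z ^ 2 - sn z ^ 2) := funext fun z => (hg1 z).deriv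
  have hg2 : ∀ z, HasDerivAt (fun z => -2 * k ^ 2 * E * dn z * (cn z ^ 2 - sn z ^ 2))
      (2 * k ^ 4 * E * sn z * cn z * (cn z ^ 2 - sn z ^ 2)
        + 8 * k ^ 2 * E * sn z * cn z * dn z ^ 2) z := by
    intro z
    have h := (((hdn' z).const_mul (-2 * k ^ 2 * E)).fun_mul
      (((hcn' z).fun_pow 2).fun_sub ((hsn' z).fun_pow 2)))
    convert h using 1
    all_goals first
      | rfl
      | (funext x; simp only [id_eq]; push_cast; ring)
      | (simp only [id_eq]; push_cast; ring)
      | (funext x; push_cast; ring)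
      | (push_cast; ring)
  have hd2 : deriv (deriv (fun z => -2 * k ^ 2 * E * sn z * cn z)) z
      = 2 * k ^ 4 * E * sn z * cn z * (cn z ^ 2 - sn z ^ 2)
        + 8 * k ^ 2 * E * sn z * cn z * dn z ^ 2 := by
    rw [hg1']; exact (hg2 z).deriv
  unfold _root_.Lp
  rw [hd2]
  linear_combination (-2 * k ^ 4 * E * sn z * cn z) * h1 z
    + (4 * k ^ 2 * E * sn z * cn z) * h2 z
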